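/- For every Banach function space X(ℝⁿ) and every f ∈ X(ℝⁿ), the norm of f can be computed by duality with simple compactly supported functions: ‖f‖_X = sup{ |∫ f s| : s simple with compact support, ‖s‖_{X'} ≤ 1 }. -/

import Mathlib

open MeasureTheory Filter ENNReal Metric

noncomputable section

/-- A Banach function norm on measurable functions over a measure space `α`,
following Bennett–Sharpley: axioms (A1)–(A5). -/
structure BanachFunctionNorm (α : Type) [MeasureSpace α] where
  ρ : (α → ℝ≥0∞) → ℝ≥0∞
  ρ_zero : ∀ f, ρ f = 0 ↔ f =ᵐ[volume] 0
  ρ_smul : ∀ (a : NNReal) (f : α → ℝ≥0∞), ρ (fun x => (a : ℝ≥0∞) * f x) = a * ρ f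
  ρ_add : ∀ f g, ρ (fun x => f x + g x) ≤ ρ f + ρ g
  ρ_mono : ∀ f g, (∀ᵐ x ∂volume, f x ≤ g x) → ρ f ≤ ρ g
  ρ_fatou : ∀ (f : ℕ → α → ℝ≥0∞),
      (∀ j, ∀ᵐ x ∂volume, f j x ≤ f (j+1) x) →
      ρ (fun x => ⨆ j, f j x) = ⨆ j, ρ (f j)
  ρ_finite : ∀ E : Set α, MeasurableSet E → volume E < ⊤ → ρ (E.indicator 1) < ⊤
  ρ_loc_embed : ∀ E : Set α, MeasurableSet E → volume E < ⊤ →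
      ∃ C : ℝ≥0∞, C < ⊤ ∧ ∀ f : α → ℝ≥0∞, ∫⁻ x in E, f x ∂volume ≤ C * ρ f

/-- The associate (Köthe dual) norm of a Banach function norm. -/
def BanachFunctionNorm.associate {α : Type} [MeasureSpace α]
    (X : BanachFunctionNorm α) (g : α → ℝ≥0∞) : ℝ≥0∞ :=
  ⨆ f ∈ {f : α → ℝ≥0∞ | X.ρ f ≤ 1}, ∫⁻ x, f x * g x ∂volume

namespace BanachFunctionNorm
variable {α : Type} [MeasureSpace α] (X : BanachFunctionNorm α)

lemma rho_congr_ae {f g : α → ℝ≥0∞} (h : f =ᵐ[volume] g) : X.ρ f = X.ρ g :=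
  le_antisymm (X.ρ_mono _ _ (h.le)) (X.ρ_mono _ _ (h.symm.le))

lemma rho_liminf_le (F : ℕ → α → ℝ≥0∞) :
    X.ρ (fun x => liminf (fun k => F k x) atTop) ≤ liminf (fun k => X.ρ (F k)) atTop := by
  have h1 : X.ρ (fun x => liminf (fun k => F k x) atTop)
      = X.ρ (fun x => ⨆ j, ⨅ i, ⨅ (_ : i ≥ j), F i x) := by
    apply X.rho_congr_ae
    filter_upwards with x
    rw [liminf_eq_iSup_iInf_of_nat]
  rw [h1, X.ρ_fatou]
  · rw [liminf_eq_iSup_iInf_of_nat]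
    apply iSup_mono
    intro j
    apply le_iInf₂
    intro i hi
    apply X.ρ_mono
    filter_upwards with x
    exact iInf₂_le i hi
  · intro j
    filter_upwards with x
    apply iInf_mono'
    intro i
    exact ⟨i, iInf_mono' fun hi => ⟨le_trans (Nat.le_succ j) hi, le_rfl⟩⟩

lemma lintegral_mul_le_of_rho_le_one {φ g : α → ℝ≥0∞} (hmem : X.ρ φ ≤ 1) :
    ∫⁻ x, φ x * g x ∂volume ≤ X.associate g :=
  le_iSup₂_of_le φ hmem le_rfl

/-- Hölder's inequality for the associate norm. -/
lemma lintegral_mul_le_rho {φ g : α → ℝ≥0∞} (hφ : X.ρ φ < ⊤) (hg : X.associate g ≤ 1) :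
    ∫⁻ x, φ x * g x ∂volume ≤ X.ρ φ := by
  rcases eq_or_ne (X.ρ φ) 0 with h0 | h0
  · have hφ0 : φ =ᵐ[volume] 0 := (X.ρ_zero φ).1 h0
    have : (fun x => φ x * g x) =ᵐ[volume] 0 := by
      filter_upwards [hφ0] with x hx
      simp [Pi.zero_apply] at hx ⊢
      simp [hx]
    rw [lintegral_congr_ae this]
    simp
  · set r : NNReal := (X.ρ φ).toNNReal with hr
    have hrpos : r ≠ 0 := by
      simp [hr, ENNReal.toNNReal_eq_zero_iff, h0, hφ.ne]
    have hrρ : (r : ℝ≥0∞) = X.ρ φ := ENNReal.coe_toNNReal hφ.ne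
    have hmem : X.ρ (fun x => ((r⁻¹ : NNReal) : ℝ≥0∞) * φ x) ≤ 1 := by
      rw [X.ρ_smul, ← hrρ, ← ENNReal.coe_mul, inv_mul_cancel₀ hrpos, ENNReal.coe_one]
    have h1 : ∫⁻ x, ((r⁻¹ : NNReal) : ℝ≥0∞) * φ x * g x ∂volume ≤ 1 :=
      le_trans (X.lintegral_mul_le_of_rho_le_one hmem) hg
    have h2 : ((r⁻¹ : NNReal) : ℝ≥0∞) * ∫⁻ x, φ x * g x ∂volume ≤ 1 := by
      rw [← lintegral_const_mul' _ _ ENNReal.coe_ne_top]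
      simpa [mul_assoc] using h1
    calc ∫⁻ x, φ x * g x ∂volume
        = (r : ℝ≥0∞) * (((r⁻¹ : NNReal) : ℝ≥0∞) * ∫⁻ x, φ x * g x ∂volume) := by
          rw [← mul_assoc, ← ENNReal.coe_mul, mul_inv_cancel₀ hrpos, ENNReal.coe_one, one_mul]
      _ ≤ (r : ℝ≥0∞) * 1 := mul_le_mul_right h2 _
      _ = X.ρ φ := by rw [mul_one, hrρ]

lemma associate_mono {g₁ g₂ : α → ℝ≥0∞} (h : ∀ x, g₁ x ≤ g₂ x) :
    X.associate g₁ ≤ X.associate g₂ := by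
  apply iSup₂_mono
  intro φ _
  exact lintegral_mono fun x => mul_le_mul_right (h x) _

lemma associate_le_of_forall_measurable {G : α → ℝ≥0∞} {c : ℝ≥0∞}
    (hG : Measurable G) (hGfin : ∀ x, G x < ⊤)
    (h : ∀ φ : α → ℝ≥0∞, Measurable φ → X.ρ φ ≤ 1 → ∫⁻ x, φ x * G x ∂volume ≤ c) :
    X.associate G ≤ c := by
  apply iSup₂_le
  intro φ hφ
  obtain ⟨p, hpm, hple, hpint⟩ :=
    exists_measurable_le_lintegral_eq volume (fun x => φ x * G x)
  rw [hpint]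
  set ψ : α → ℝ≥0∞ := fun x => p x / G x with hψ
  have hψm : Measurable ψ := hpm.div hG
  have hψle : ∀ x, ψ x ≤ φ x := by
    intro x
    rcases eq_or_ne (G x) 0 with h0 | h0
    · have : p x = 0 := le_antisymm (by simpa [h0] using hple x) (zero_le)
      simp [hψ, this]
    · exact ENNReal.div_le_of_le_mul' (by simpa [mul_comm] using hple x)
  have hρψ : X.ρ ψ ≤ 1 :=
    le_trans (X.ρ_mono _ _ (Eventually.of_forall hψle)) (by exact hφ)
  have hpψ : ∀ x, p x ≤ ψ x * G x := by
    intro x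
    rcases eq_or_ne (G x) 0 with h0 | h0
    · have : p x = 0 := le_antisymm (by simpa [h0] using hple x) (zero_le)
      simp [this]
    · rw [hψ, ENNReal.div_mul_cancel h0 (hGfin x).ne]
  exact le_trans (lintegral_mono hpψ) (h ψ hψm hρψ)

end BanachFunctionNorm

lemma iSup_min_natCast (a : ℝ≥0∞) : ⨆ k : ℕ, min a (k : ℝ≥0∞) = a := by
  apply le_antisymm (iSup_le fun k => min_le_left _ _)
  rcases eq_or_ne a ⊤ with rfl | ha
  · simp only [min_eq_right (le_top : (_:ℝ≥0∞) ≤ ⊤)]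
    rw [ENNReal.iSup_natCast]
  · obtain ⟨k, hk⟩ := ENNReal.exists_nat_gt ha
    exact le_iSup_of_le k (by simp [min_eq_left hk.le])

section Core
variable {n : ℕ}
local notation "V" => EuclideanSpace ℝ (Fin n)

set_option synthInstance.maxHeartbeats 1000000 in
set_option maxHeartbeats 1000000 in
lemma core_exists_dual (X : BanachFunctionNorm V) (m : ℕ) {φ : V → ℝ≥0∞}
    (hφm : Measurable φ) (hφb : ∀ x, φ x ≤ (m : ℝ≥0∞))
    (hφs : ∀ x, x ∉ ball (0:V) m → φ x = 0)
    {lam : NNReal} (hlam : 0 < lam) (hlt : (lam : ℝ≥0∞) < X.ρ φ) :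
    ∃ G : V → ℝ≥0∞, Measurable G ∧ (∀ x, G x < ⊤) ∧ X.associate G ≤ 1 ∧
      (lam : ℝ≥0∞) < ∫⁻ x, φ x * G x ∂volume := by
  have hφfin : ∀ x, φ x < ⊤ := fun x => lt_of_le_of_lt (hφb x) (by simp)
  set B : Set V := ball (0:V) m with hBdef
  have hB : MeasurableSet B := measurableSet_ball
  have hBfin : volume B < ⊤ := measure_ball_lt_top
  set ν : Measure V := volume.restrict B with hν
  haveI : IsFiniteMeasure ν := ⟨by rw [hν, Measure.restrict_apply_univ]; exact hBfin⟩
  set N : (V → ℝ) → (V → ℝ≥0∞) :=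
    fun w => B.indicator (fun y => (‖w y‖₊ : ℝ≥0∞)) with hN
  have hNae : ∀ {w₁ w₂ : V → ℝ}, w₁ =ᵐ[ν] w₂ → N w₁ =ᵐ[volume] N w₂ := by
    intro w₁ w₂ h
    have h' := (ae_restrict_iff' hB).1 h
    filter_upwards [h'] with x hx
    by_cases hxB : x ∈ B
    · simp only [hN, Set.indicator_of_mem hxB, hx hxB]
    · simp only [hN, Set.indicator_of_notMem hxB]
  set C : Set (Lp ℝ 2 ν) := {ψ | X.ρ (N (ψ : V → ℝ)) ≤ 1} with hC
  have hCconv : Convex ℝ C := by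
    intro ψ₁ h₁ ψ₂ h₂ a b ha hb hab
    have hrep : ((a • ψ₁ + b • ψ₂ : Lp ℝ 2 ν) : V → ℝ) =ᵐ[ν]
        fun x => a * (ψ₁ : V → ℝ) x + b * (ψ₂ : V → ℝ) x := by
      filter_upwards [Lp.coeFn_add (a • ψ₁) (b • ψ₂), Lp.coeFn_smul a ψ₁,
        Lp.coeFn_smul b ψ₂] with x hx h1 h2
      simp only [hx, Pi.add_apply, h1, h2, Pi.smul_apply, smul_eq_mul]
    rw [hC, Set.mem_setOf_eq, X.rho_congr_ae (hNae hrep)]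
    set a' : NNReal := ⟨a, ha⟩ with ha2
    set b' : NNReal := ⟨b, hb⟩ with hb2
    have hpt : ∀ x, N (fun y => a * (ψ₁:V→ℝ) y + b * (ψ₂:V→ℝ) y) x ≤
        (a' : ℝ≥0∞) * N ((ψ₁:V→ℝ)) x + (b' : ℝ≥0∞) * N ((ψ₂:V→ℝ)) x := by
      intro x
      by_cases hxB : x ∈ B
      · simp only [hN, Set.indicator_of_mem hxB]
        calc (‖a * (ψ₁:V→ℝ) x + b * (ψ₂:V→ℝ) x‖₊ : ℝ≥0∞)
            ≤ (‖a * (ψ₁:V→ℝ) x‖₊ : ℝ≥0∞) + ‖b * (ψ₂:V→ℝ) x‖₊ := by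
              exact_mod_cast ENNReal.coe_le_coe.2 (nnnorm_add_le _ _)
          _ = (a' : ℝ≥0∞) * ‖(ψ₁:V→ℝ) x‖₊ + (b' : ℝ≥0∞) * ‖(ψ₂:V→ℝ) x‖₊ := by
              rw [nnnorm_mul, nnnorm_mul, Real.nnnorm_of_nonneg ha, Real.nnnorm_of_nonneg hb]
              push_cast
              rfl
      · simp only [hN, Set.indicator_of_notMem hxB]
        simp
    calc X.ρ (N (fun y => a * (ψ₁:V→ℝ) y + b * (ψ₂:V→ℝ) y))
        ≤ X.ρ (fun x => (a' : ℝ≥0∞) * N ((ψ₁:V→ℝ)) x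
            + (b' : ℝ≥0∞) * N ((ψ₂:V→ℝ)) x) :=
          X.ρ_mono _ _ (Eventually.of_forall hpt)
      _ ≤ X.ρ (fun x => (a' : ℝ≥0∞) * N ((ψ₁:V→ℝ)) x)
            + X.ρ (fun x => (b' : ℝ≥0∞) * N ((ψ₂:V→ℝ)) x) := X.ρ_add _ _
      _ = (a' : ℝ≥0∞) * X.ρ (N ((ψ₁:V→ℝ)))
            + (b' : ℝ≥0∞) * X.ρ (N ((ψ₂:V→ℝ))) := by rw [X.ρ_smul, X.ρ_smul]
      _ ≤ (a' : ℝ≥0∞) * 1 + (b' : ℝ≥0∞) * 1 := by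
          exact add_le_add (mul_le_mul_right h₁ _) (mul_le_mul_right h₂ _)
      _ = ((a' + b' : NNReal) : ℝ≥0∞) := by push_cast; ring
      _ = 1 := by
          have : a' + b' = 1 := by ext; push_cast; exact hab
          rw [this]; simp
  haveI : SequentialSpace (Lp ℝ 2 ν) := inferInstance
  have hCclosed : IsClosed C := by
    apply IsSeqClosed.isClosed
    intro ψs ψ hmem htend
    obtain ⟨ns, -, h2⟩ := (tendstoInMeasure_of_tendsto_Lp htend).exists_seq_tendsto_ae
    have h3 := (ae_restrict_iff' hB).1 h2
    have h4 : N ((ψ : V → ℝ)) =ᵐ[volume]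
        fun x => liminf (fun i => N (((ψs (ns i)) : V → ℝ)) x) atTop := by
      filter_upwards [h3] with x hx
      by_cases hxB : x ∈ B
      · have ht : Tendsto (fun i => N (((ψs (ns i)) : V → ℝ)) x) atTop
            (nhds (N ((ψ:V→ℝ)) x)) := by
          simp only [hN, Set.indicator_of_mem hxB]
          exact ENNReal.tendsto_coe.2 ((continuous_nnnorm.tendsto _).comp (hx hxB))
        exact ht.liminf_eq.symm
      · simp only [hN, Set.indicator_of_notMem hxB, liminf_const]
    rw [hC, Set.mem_setOf_eq, X.rho_congr_ae h4]
    refine le_trans (X.rho_liminf_le _) ?_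
    refine le_trans (liminf_le_liminf (Eventually.of_forall fun i => hmem (ns i))) ?_
    simp [liminf_const]
  -- the point to be separated
  set ψ₀fun : V → ℝ := fun x => (φ x).toReal * (lam:ℝ)⁻¹ with hψ₀fun
  have hψ₀meas : Measurable ψ₀fun := hφm.ennreal_toReal.mul_const _
  have hψ₀bd : ∀ x, ‖ψ₀fun x‖ ≤ (m:ℝ) * (lam:ℝ)⁻¹ := by
    intro x
    rw [hψ₀fun, Real.norm_eq_abs, abs_mul, abs_of_nonneg ENNReal.toReal_nonneg,
      abs_of_nonneg (by positivity)]
    apply mul_le_mul_of_nonneg_right _ (by positivity)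
    simpa using ENNReal.toReal_mono (by simp) (hφb x)
  have hψ₀mem : MemLp ψ₀fun 2 ν :=
    MemLp.of_bound hψ₀meas.aestronglyMeasurable _ (Eventually.of_forall hψ₀bd)
  set ψ₀ : Lp ℝ 2 ν := hψ₀mem.toLp ψ₀fun with hψ₀
  have hψ₀pt : N ψ₀fun = fun x => ((lam⁻¹ : NNReal) : ℝ≥0∞) * φ x := by
    funext x
    by_cases hxB : x ∈ B
    · simp only [hN, Set.indicator_of_mem hxB, hψ₀fun]
      rw [← enorm_eq_nnnorm, Real.enorm_eq_ofReal_abs, abs_of_nonneg (by positivity),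
        ENNReal.ofReal_mul ENNReal.toReal_nonneg, ENNReal.ofReal_toReal (hφfin x).ne]
      rw [show ((lam:ℝ))⁻¹ = ((lam⁻¹ : NNReal) : ℝ) from by simp]
      rw [ENNReal.ofReal_coe_nnreal, mul_comm]
    · simp [hN, Set.indicator_of_notMem hxB, hφs x hxB]
  have hψ₀ρ : 1 < X.ρ (N ((ψ₀ : V → ℝ))) := by
    rw [X.rho_congr_ae (hNae hψ₀mem.coeFn_toLp), hψ₀pt, X.ρ_smul]
    rcases eq_or_ne (X.ρ φ) ⊤ with htop | htop
    · rw [htop, ENNReal.mul_top (by simp [hlam.ne'])]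
      exact lt_top_iff_ne_top.2 one_ne_top
    · have h1 : (1:ℝ≥0∞) = ((lam⁻¹ : NNReal) : ℝ≥0∞) * lam := by
        rw [← ENNReal.coe_mul, inv_mul_cancel₀ hlam.ne']; simp
      rw [h1]
      exact ENNReal.mul_lt_mul_right (by simp [hlam.ne']) (by simp) hlt
  have hψ₀notC : ψ₀ ∉ C := by
    rw [hC, Set.mem_setOf_eq]
    exact fun h => absurd (lt_of_lt_of_le hψ₀ρ h) (lt_irrefl _)
  -- Hahn-Banach separation
  obtain ⟨Φ, u, hΦC, hΦψ₀⟩ := geometric_hahn_banach_closed_point hCconv hCclosed hψ₀notC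
  set g : Lp ℝ 2 ν := (InnerProductSpace.toDual ℝ (Lp ℝ 2 ν)).symm Φ with hgdef
  have hgΦ : ∀ ψ : Lp ℝ 2 ν, Φ ψ = ∫ x, (g : V → ℝ) x * (ψ : V → ℝ) x ∂ν := by
    intro ψ
    have h1 : (inner ℝ g ψ : ℝ) = Φ ψ := by
      rw [hgdef]; exact InnerProductSpace.toDual_symm_apply
    rw [← h1, L2.inner_def]
    apply integral_congr_ae
    filter_upwards with x
    simp [RCLike.inner_apply, starRingEnd_apply, mul_comm]
  have h0C : (0 : Lp ℝ 2 ν) ∈ C := by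
    rw [hC, Set.mem_setOf_eq]
    have hz : N (((0 : Lp ℝ 2 ν) : V → ℝ)) =ᵐ[volume] (0 : V → ℝ≥0∞) := by
      refine (hNae (Lp.coeFn_zero ℝ 2 ν)).trans (Eventually.of_forall fun x => ?_)
      simp [hN]
    rw [X.rho_congr_ae hz, (X.ρ_zero _).2 (Eventually.of_forall fun x => rfl)]
    exact zero_le_one
  have hu : 0 < u := by
    have := hΦC 0 h0C
    simpa using this
  have hune : ENNReal.ofReal u ≠ 0 := (ENNReal.ofReal_pos.2 hu).ne'
  have hunetop : ENNReal.ofReal u ≠ ⊤ := ENNReal.ofReal_ne_top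
  -- measurable representative of g
  obtain ⟨gm, hgmsm, hgae⟩ : ∃ gm : V → ℝ, StronglyMeasurable gm ∧ (g : V → ℝ) =ᵐ[ν] gm :=
    ⟨(Lp.aestronglyMeasurable g).mk _, (Lp.aestronglyMeasurable g).stronglyMeasurable_mk,
      (Lp.aestronglyMeasurable g).ae_eq_mk⟩
  have hgmm : Measurable gm := hgmsm.measurable
  have hgint : Integrable gm ν :=
    (memLp_one_iff_integrable.mp ((Lp.memLp g).mono_exponent (by norm_num))).congr hgae
  -- Claim A : the dual bound
  have claimA : ∀ φ' : V → ℝ≥0∞, Measurable φ' → X.ρ φ' ≤ 1 →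
      ∫⁻ x, φ' x * ‖gm x‖₊ ∂ν ≤ ENNReal.ofReal u := by
    intro φ' hφ'm hφ'ρ
    have key : ∀ k : ℕ, ∫⁻ x, min (φ' x) k * ‖gm x‖₊ ∂ν ≤ ENNReal.ofReal u := by
      intro k
      have hkne : ((k:ℝ≥0∞)) ≠ ⊤ := by simp
      have htr : ∀ x : V, (min (φ' x) (k:ℝ≥0∞)).toReal ≤ (k:ℝ) := fun x => by
        simpa using ENNReal.toReal_mono hkne (min_le_right (φ' x) k)
      set sgn : V → ℝ := fun x => if gm x < 0 then -1 else 1 with hsgn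
      have hsgnm : Measurable sgn :=
        Measurable.ite (measurableSet_lt hgmm measurable_const) measurable_const measurable_const
      have habs : ∀ x, gm x * sgn x = |gm x| := by
        intro x; by_cases h : gm x < 0
        · simp [hsgn, h, abs_of_neg h]
        · simp [hsgn, h, abs_of_nonneg (not_lt.1 h)]
      have hsgnabs : ∀ x, |sgn x| = 1 := by
        intro x; by_cases h : gm x < 0 <;> simp [hsgn, h]
      set q : V → ℝ := fun x => (min (φ' x) k).toReal * sgn x with hq
      have hqm : Measurable q := ((hφ'm.min measurable_const).ennreal_toReal).mul hsgnm
      have hminfin : ∀ x, min (φ' x) (k:ℝ≥0∞) ≠ ⊤ := fun x =>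
        (lt_of_le_of_lt (min_le_right _ _) (by simp)).ne
      have hqb : ∀ x, ‖q x‖ ≤ (k:ℝ) := by
        intro x
        rw [hq, Real.norm_eq_abs, abs_mul, hsgnabs, mul_one,
          abs_of_nonneg ENNReal.toReal_nonneg]
        exact htr x
      have hqmem : MemLp q 2 ν :=
        MemLp.of_bound hqm.aestronglyMeasurable _ (Eventually.of_forall hqb)
      set qL : Lp ℝ 2 ν := hqmem.toLp q with hqLdef
      have hqC : qL ∈ C := by
        rw [hC, Set.mem_setOf_eq, X.rho_congr_ae (hNae hqmem.coeFn_toLp)]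
        refine le_trans (X.ρ_mono _ _ (Eventually.of_forall fun x => ?_)) hφ'ρ
        by_cases hxB : x ∈ B
        · simp only [hN, Set.indicator_of_mem hxB]
          calc ((‖q x‖₊ : ℝ≥0∞)) = ENNReal.ofReal |q x| := Real.enorm_eq_ofReal_abs _
            _ = ENNReal.ofReal ((min (φ' x) k).toReal) := by
                rw [hq, abs_mul, hsgnabs, mul_one, abs_of_nonneg ENNReal.toReal_nonneg]
            _ = min (φ' x) k := ENNReal.ofReal_toReal (hminfin x)
            _ ≤ φ' x := min_le_left _ _
        · simp [hN, Set.indicator_of_notMem hxB]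
      have h5 : Φ qL < u := hΦC qL hqC
      rw [hgΦ] at h5
      have h6 : ∫ x, (g:V→ℝ) x * (qL:V→ℝ) x ∂ν = ∫ x, |gm x| * (min (φ' x) k).toReal ∂ν := by
        apply integral_congr_ae
        filter_upwards [hgae, hqmem.coeFn_toLp] with x h1 h2
        rw [h1, h2, hq]
        rw [show gm x * ((min (φ' x) (k:ℝ≥0∞)).toReal * sgn x)
            = (min (φ' x) (k:ℝ≥0∞)).toReal * (gm x * sgn x) from by ring, habs x, mul_comm]
      rw [h6] at h5
      have hint : Integrable (fun x => |gm x| * (min (φ' x) k).toReal) ν := by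
        apply Integrable.mono' (hgint.abs.mul_const (k:ℝ))
        · exact (hgmm.abs.mul ((hφ'm.min measurable_const).ennreal_toReal)).aestronglyMeasurable
        · filter_upwards with x
          rw [Real.norm_eq_abs, abs_mul, abs_abs, abs_of_nonneg ENNReal.toReal_nonneg]
          exact mul_le_mul_of_nonneg_left (htr x) (abs_nonneg _)
      have h7 : ∫⁻ x, min (φ' x) ↑k * ‖gm x‖₊ ∂ν
          = ENNReal.ofReal (∫ x, |gm x| * (min (φ' x) ↑k).toReal ∂ν) := by
        rw [ofReal_integral_eq_lintegral_ofReal hint (Eventually.of_forall fun x => by positivity)]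
        apply lintegral_congr fun x => ?_
        rw [ENNReal.ofReal_mul (abs_nonneg _), ENNReal.ofReal_toReal (hminfin x),
          ← Real.enorm_eq_ofReal_abs, mul_comm, enorm_eq_nnnorm]
      rw [h7]
      exact ENNReal.ofReal_le_ofReal h5.le
    calc ∫⁻ x, φ' x * ‖gm x‖₊ ∂ν = ∫⁻ x, ⨆ k : ℕ, min (φ' x) k * ‖gm x‖₊ ∂ν := by
          apply lintegral_congr fun x => ?_
          rw [← ENNReal.iSup_mul, iSup_min_natCast]
      _ = ⨆ k : ℕ, ∫⁻ x, min (φ' x) ↑k * ‖gm x‖₊ ∂ν := by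
          apply lintegral_iSup (fun k => ((hφ'm.min measurable_const).mul hgmm.enorm))
          intro i j hij x
          exact mul_le_mul_left (min_le_min le_rfl (by exact_mod_cast hij)) _
      _ ≤ ENNReal.ofReal u := iSup_le key
  -- Claim B : the lower bound
  have hint₁ : Integrable (fun x => |gm x| * (φ x).toReal) ν := by
    apply Integrable.mono' (hgint.abs.mul_const (m:ℝ))
    · exact (hgmm.abs.mul hφm.ennreal_toReal).aestronglyMeasurable
    · filter_upwards with x
      rw [Real.norm_eq_abs, abs_mul, abs_abs, abs_of_nonneg ENNReal.toReal_nonneg]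
      exact mul_le_mul_of_nonneg_left
        (by simpa using ENNReal.toReal_mono (show ((m:ℝ≥0∞)) ≠ ⊤ by simp) (hφb x)) (abs_nonneg _)
  have hΦψ₀2 : u < (∫ x, |gm x| * (φ x).toReal ∂ν) * (lam:ℝ)⁻¹ := by
    rw [hgΦ] at hΦψ₀
    have h1 : ∫ x, (g:V→ℝ) x * (ψ₀:V→ℝ) x ∂ν = ∫ x, gm x * ψ₀fun x ∂ν := by
      apply integral_congr_ae
      filter_upwards [hgae, hψ₀mem.coeFn_toLp] with x h1 h2
      rw [h1, h2]
    rw [h1] at hΦψ₀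
    have hint₀ : Integrable (fun x => gm x * ψ₀fun x) ν := by
      apply Integrable.mono' (hgint.abs.mul_const ((m:ℝ) * (lam:ℝ)⁻¹))
      · exact (hgmm.mul hψ₀meas).aestronglyMeasurable
      · filter_upwards with x
        rw [Real.norm_eq_abs, abs_mul]
        exact mul_le_mul_of_nonneg_left
          (le_trans (le_abs_self _) (by simpa [Real.norm_eq_abs] using hψ₀bd x)) (abs_nonneg _)
    calc u < ∫ x, gm x * ψ₀fun x ∂ν := hΦψ₀
      _ ≤ ∫ x, |gm x| * (φ x).toReal * (lam:ℝ)⁻¹ ∂ν := by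
          apply integral_mono hint₀ (hint₁.mul_const _)
          intro x
          simp only [hψ₀fun]
          rw [show gm x * ((φ x).toReal * (lam:ℝ)⁻¹) = gm x * (φ x).toReal * (lam:ℝ)⁻¹ from by
            ring]
          apply mul_le_mul_of_nonneg_right _ (by positivity)
          exact mul_le_mul_of_nonneg_right (le_abs_self _) ENNReal.toReal_nonneg
      _ = (∫ x, |gm x| * (φ x).toReal ∂ν) * (lam:ℝ)⁻¹ := integral_mul_const _ _
  set J := ∫ x, |gm x| * (φ x).toReal ∂ν with hJ
  have hlamR : (0:ℝ) < (lam:ℝ) := hlam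
  have hJu : u * (lam:ℝ) < J := by
    rw [← lt_div_iff₀ hlamR]
    rw [div_eq_mul_inv]
    exact hΦψ₀2
  have hJpos : (0:ℝ) < J := lt_trans (by positivity) hJu
  have h9 : (lam : ℝ≥0∞) * ENNReal.ofReal u < ∫⁻ x, φ x * ‖gm x‖₊ ∂ν := by
    have h1 : ∫⁻ x, φ x * ‖gm x‖₊ ∂ν = ENNReal.ofReal J := by
      rw [hJ, ofReal_integral_eq_lintegral_ofReal hint₁ (Eventually.of_forall fun x => by
        positivity)]
      apply lintegral_congr fun x => ?_
      rw [ENNReal.ofReal_mul (abs_nonneg _), ← Real.enorm_eq_ofReal_abs,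
        ENNReal.ofReal_toReal (hφfin x).ne, mul_comm, enorm_eq_nnnorm]
    rw [h1]
    calc (lam:ℝ≥0∞) * ENNReal.ofReal u = ENNReal.ofReal (u * lam) := by
          rw [ENNReal.ofReal_mul hu.le, ENNReal.ofReal_coe_nnreal, mul_comm]
      _ < ENNReal.ofReal J := (ENNReal.ofReal_lt_ofReal_iff hJpos).2 hJu
  -- conclusion
  have hconv : ∀ p : V → ℝ≥0∞,
      ∫⁻ x, p x * (B.indicator (fun y => ((‖gm y‖₊:ℝ≥0∞))) x * (ENNReal.ofReal u)⁻¹) ∂volume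
        = (∫⁻ x, p x * ‖gm x‖₊ ∂ν) * (ENNReal.ofReal u)⁻¹ := by
    intro p
    rw [show (∫⁻ x, p x * ‖gm x‖₊ ∂ν)
        = ∫⁻ x, B.indicator (fun y => p y * ‖gm y‖₊) x ∂volume from
      (lintegral_indicator hB _).symm]
    rw [← lintegral_mul_const' _ _ (ENNReal.inv_ne_top.2 hune)]
    apply lintegral_congr fun x => ?_
    by_cases hxB : x ∈ B
    · simp [Set.indicator_of_mem hxB, mul_assoc]
    · simp [Set.indicator_of_notMem hxB]
  refine ⟨fun x => B.indicator (fun y => ((‖gm y‖₊ : ℝ≥0∞))) x * (ENNReal.ofReal u)⁻¹,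
    (hgmm.enorm.indicator hB).mul_const _, ?_, ?_, ?_⟩
  · intro x
    apply ENNReal.mul_lt_top
    · by_cases hxB : x ∈ B
      · simp [Set.indicator_of_mem hxB]
      · simp [Set.indicator_of_notMem hxB]
    · simp [ENNReal.inv_lt_top, ENNReal.ofReal_pos.2 hu]
  · apply X.associate_le_of_forall_measurable (show Measurable (fun x => B.indicator
      (fun y => ((‖gm y‖₊ : ℝ≥0∞))) x * (ENNReal.ofReal u)⁻¹) from
      (hgmm.enorm.indicator hB).mul_const _)
    · intro x
      apply ENNReal.mul_lt_top
      · by_cases hxB : x ∈ B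
        · simp [Set.indicator_of_mem hxB]
        · simp [Set.indicator_of_notMem hxB]
      · simp [ENNReal.inv_lt_top, ENNReal.ofReal_pos.2 hu]
    · intro φ' hm hρ
      rw [hconv φ']
      calc (∫⁻ x, φ' x * ‖gm x‖₊ ∂ν) * (ENNReal.ofReal u)⁻¹
          ≤ ENNReal.ofReal u * (ENNReal.ofReal u)⁻¹ :=
            mul_le_mul_left (claimA φ' hm hρ) _
        _ = 1 := ENNReal.mul_inv_cancel hune hunetop
  · rw [hconv φ]
    rw [show (lam:ℝ≥0∞) = ((lam:ℝ≥0∞) * ENNReal.ofReal u) * (ENNReal.ofReal u)⁻¹ from by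
      rw [mul_assoc, ENNReal.mul_inv_cancel hune hunetop, mul_one]]
    exact ENNReal.mul_lt_mul_left (ENNReal.inv_ne_zero.2 hunetop)
      (ENNReal.inv_ne_top.2 hune) h9



lemma exists_simple_dual (X : BanachFunctionNorm V) (m : ℕ) {φ : V → ℝ≥0∞}
    (hφm : Measurable φ) (hφb : ∀ x, φ x ≤ (m : ℝ≥0∞))
    (hφs : ∀ x, x ∉ ball (0:V) m → φ x = 0)
    {lam : NNReal} (hlam : 0 < lam) (hlt : (lam : ℝ≥0∞) < X.ρ φ) :
    ∃ r : SimpleFunc V ℝ, (∀ x, 0 ≤ r x) ∧ HasCompactSupport ⇑r ∧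
      X.associate (fun x => ((‖r x‖₊ : ℝ≥0∞))) ≤ 1 ∧
      (lam : ℝ≥0∞) < ∫⁻ x, φ x * ‖r x‖₊ ∂volume := by
  obtain ⟨G, hGm, hGfin, hGassoc, hGlam⟩ := core_exists_dual X m hφm hφb hφs hlam hlt
  set e : ℕ → SimpleFunc V ℝ≥0∞ :=
    fun k => (SimpleFunc.eapprox G k).restrict (closedBall (0:V) k) with he
  have hcb : ∀ k:ℕ, MeasurableSet (closedBall (0:V) k) := fun k => measurableSet_closedBall
  have hecoe : ∀ (k:ℕ) x, e k x = (closedBall (0:V) k).indicator (⇑(SimpleFunc.eapprox G k)) x := by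
    intro k x; rw [he]; rw [SimpleFunc.coe_restrict _ (hcb k)]
  have hemono : ∀ (i j : ℕ), i ≤ j → ∀ x, e i x ≤ e j x := by
    intro i j hij x
    rw [hecoe, hecoe]
    by_cases hx : x ∈ closedBall (0:V) i
    · have hx' : x ∈ closedBall (0:V) j :=
        closedBall_subset_closedBall (by exact_mod_cast hij) hx
      rw [Set.indicator_of_mem hx, Set.indicator_of_mem hx']
      exact SimpleFunc.monotone_eapprox G hij x
    · rw [Set.indicator_of_notMem hx]; exact zero_le
  have heleG : ∀ (k:ℕ) x, e k x ≤ G x := by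
    intro k x
    rw [hecoe]
    by_cases hx : x ∈ closedBall (0:V) k
    · rw [Set.indicator_of_mem hx]
      exact (SimpleFunc.iSup_eapprox_apply hGm x) ▸ le_iSup (fun j => SimpleFunc.eapprox G j x) k
    · rw [Set.indicator_of_notMem hx]; exact zero_le
  have hesup : ∀ x, ⨆ k, e k x = G x := by
    intro x
    apply le_antisymm (iSup_le fun k => heleG k x)
    conv_lhs => rw [← SimpleFunc.iSup_eapprox_apply hGm x]
    apply iSup_le; intro k
    refine le_iSup_of_le (max k ⌈dist x (0:V)⌉₊) ?_
    rw [hecoe]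
    have hx : x ∈ closedBall (0:V) ((max k ⌈dist x (0:V)⌉₊ : ℕ) : ℝ) := by
      rw [mem_closedBall]
      calc dist x 0 ≤ (⌈dist x (0:V)⌉₊ : ℝ) := Nat.le_ceil _
        _ ≤ _ := by exact_mod_cast Nat.le_max_right k ⌈dist x (0:V)⌉₊
    rw [Set.indicator_of_mem hx]
    exact SimpleFunc.monotone_eapprox G (le_max_left _ _) x
  have hMC : ∫⁻ x, φ x * G x ∂volume = ⨆ k, ∫⁻ x, φ x * e k x ∂volume := by
    rw [show (fun x => φ x * G x) = fun x => ⨆ k, φ x * e k x from funext fun x => by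
      rw [← ENNReal.mul_iSup, hesup x]]
    exact lintegral_iSup (fun k => hφm.mul (e k).measurable)
      (fun i j hij x => mul_le_mul_right (hemono i j hij x) _)
  rw [hMC] at hGlam
  obtain ⟨k, hk⟩ := lt_iSup_iff.1 hGlam
  set r : SimpleFunc V ℝ := (e k).map ENNReal.toReal with hrdef
  have hefin : ∀ x, e k x ≠ ⊤ := by
    intro x
    rw [hecoe]
    by_cases hx : x ∈ closedBall (0:V) k
    · rw [Set.indicator_of_mem hx]; exact (SimpleFunc.eapprox_lt_top G k x).ne
    · rw [Set.indicator_of_notMem hx]; simp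
  have hrx : ∀ x, r x = (e k x).toReal := fun x => SimpleFunc.map_apply _ _ _
  have hr : ∀ x, ((‖r x‖₊ : ℝ≥0∞)) = e k x := by
    intro x
    rw [hrx x, ← enorm_eq_nnnorm, Real.enorm_eq_ofReal_abs, abs_of_nonneg ENNReal.toReal_nonneg,
      ENNReal.ofReal_toReal (hefin x)]
  refine ⟨r, fun x => by rw [hrx x]; exact ENNReal.toReal_nonneg, ?_, ?_, ?_⟩
  · apply HasCompactSupport.intro (isCompact_closedBall (0:V) (k:ℝ))
    intro x hx
    rw [hrx x, hecoe, Set.indicator_of_notMem hx]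
    simp
  · refine le_trans (X.associate_mono fun x => ?_) hGassoc
    rw [hr x]
    exact heleG k x
  · calc (lam:ℝ≥0∞) < ∫⁻ x, φ x * e k x ∂volume := hk
      _ = ∫⁻ x, φ x * ‖r x‖₊ ∂volume := lintegral_congr fun x => by rw [hr x]

end Core

/-- For every Banach function space `X(ℝⁿ)` and every `f ∈ X(ℝⁿ)`, the norm of `f` is the
supremum of `|∫ f s|` over simple compactly supported `s` with `‖s‖_{X'} ≤ 1`. -/
theorem norm_eq_sup_pairing_simple_compactSupport {n : ℕ}
    (X : BanachFunctionNorm (EuclideanSpace ℝ (Fin n)))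
    (f : EuclideanSpace ℝ (Fin n) → ℂ) (hf : AEMeasurable f)
    (hfX : X.ρ (fun x => (‖f x‖₊ : ℝ≥0∞)) < ⊤) :
    X.ρ (fun x => (‖f x‖₊ : ℝ≥0∞)) =
      ⨆ s : {s : SimpleFunc (EuclideanSpace ℝ (Fin n)) ℂ //
          HasCompactSupport ⇑s ∧ X.associate (fun x => (‖s x‖₊ : ℝ≥0∞)) ≤ 1},
        (‖∫ x, f x * s.1 x‖₊ : ℝ≥0∞) := by
  apply le_antisymm
  · -- hard direction
    obtain ⟨f', hf'm, hff'⟩ : ∃ f', Measurable f' ∧ f =ᵐ[volume] f' :=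
      ⟨hf.mk f, hf.measurable_mk, hf.ae_eq_mk⟩
    set h' : EuclideanSpace ℝ (Fin n) → ℝ≥0∞ := fun x => (‖f' x‖₊ : ℝ≥0∞) with hh'def
    have hh' : (fun x => (‖f x‖₊ : ℝ≥0∞)) =ᵐ[volume] h' := by
      filter_upwards [hff'] with x hx
      rw [hh'def, hx]
    have hρ : X.ρ (fun x => (‖f x‖₊ : ℝ≥0∞)) = X.ρ h' := X.rho_congr_ae hh'
    have hh'm : Measurable h' := hf'm.enorm
    set φ : ℕ → EuclideanSpace ℝ (Fin n) → ℝ≥0∞ := fun m =>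
      (ball (0:EuclideanSpace ℝ (Fin n)) m).indicator (fun x => min (h' x) m) with hφdef
    have hφm : ∀ m, Measurable (φ m) := fun m =>
      (hh'm.min measurable_const).indicator measurableSet_ball
    have hφb : ∀ m x, φ m x ≤ (m : ℝ≥0∞) := by
      intro m x
      by_cases hx : x ∈ ball (0:EuclideanSpace ℝ (Fin n)) m
      · simp only [hφdef]; rw [Set.indicator_of_mem hx]; exact min_le_right _ _
      · simp only [hφdef]; rw [Set.indicator_of_notMem hx]; exact zero_le
    have hφs : ∀ (m:ℕ) x, x ∉ ball (0:EuclideanSpace ℝ (Fin n)) ((m:ℕ):ℝ) → φ m x = 0 := by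
      intro m x hx
      simp only [hφdef]; rw [Set.indicator_of_notMem hx]
    have hφle : ∀ m x, φ m x ≤ h' x := by
      intro m x
      by_cases hx : x ∈ ball (0:EuclideanSpace ℝ (Fin n)) m
      · simp only [hφdef]; rw [Set.indicator_of_mem hx]; exact min_le_left _ _
      · simp only [hφdef]; rw [Set.indicator_of_notMem hx]; exact zero_le
    have hmono : ∀ (j:ℕ) x, φ j x ≤ φ (j+1) x := by
      intro j x
      by_cases hx : x ∈ ball (0:EuclideanSpace ℝ (Fin n)) j
      · have hx' : x ∈ ball (0:EuclideanSpace ℝ (Fin n)) (j+1:ℕ) := by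
          apply ball_subset_ball _ hx
          exact_mod_cast Nat.le_succ j
        simp only [hφdef]; rw [Set.indicator_of_mem hx, Set.indicator_of_mem hx']
        exact min_le_min le_rfl (by exact_mod_cast Nat.le_succ j)
      · simp only [hφdef]; rw [Set.indicator_of_notMem hx]; exact zero_le
    have hsup : ∀ x, ⨆ m, φ m x = h' x := by
      intro x
      apply le_antisymm (iSup_le fun m => hφle m x)
      obtain ⟨m₁, hm₁⟩ := ENNReal.exists_nat_gt (show h' x ≠ ⊤ by rw [hh'def]; simp)
      set m₂ : ℕ := ⌈dist x (0:EuclideanSpace ℝ (Fin n))⌉₊ + 1 with hm₂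
      refine le_iSup_of_le (max m₁ m₂) ?_
      have hx : x ∈ ball (0:EuclideanSpace ℝ (Fin n)) ((max m₁ m₂ : ℕ):ℝ) := by
        rw [mem_ball]
        calc dist x 0 ≤ (⌈dist x (0:EuclideanSpace ℝ (Fin n))⌉₊ : ℝ) := Nat.le_ceil _
          _ < ((m₂:ℕ):ℝ) := by rw [hm₂]; push_cast; linarith
          _ ≤ _ := by exact_mod_cast Nat.le_max_right m₁ m₂
      simp only [hφdef]; rw [Set.indicator_of_mem hx]
      have : h' x ≤ ((max m₁ m₂ : ℕ) : ℝ≥0∞) :=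
        le_trans hm₁.le (by exact_mod_cast Nat.le_max_left m₁ m₂)
      rw [min_eq_left this]
    have hfatou : X.ρ h' = ⨆ m, X.ρ (φ m) := by
      have hF := X.ρ_fatou φ (fun j => Eventually.of_forall fun x => hmono j x)
      rw [show (fun x => ⨆ j, φ j x) = h' from funext hsup] at hF
      exact hF
    rw [hρ, hfatou]
    apply iSup_le
    intro m
    apply ENNReal.le_of_forall_nnreal_lt
    intro lam hlam
    rcases eq_or_ne lam 0 with rfl | hne
    · exact zero_le
    obtain ⟨r, hr0, hrcs, hrassoc, hrlt⟩ :=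
      exists_simple_dual X m (hφm m) (hφb m) (hφs m) (pos_iff_ne_zero.mpr hne) hlam
    -- phase function
    set u : EuclideanSpace ℝ (Fin n) → ℂ := fun x =>
      if f' x = 0 then 1 else (starRingEnd ℂ) (f' x) * ((‖f' x‖:ℝ):ℂ)⁻¹ with hudef
    have hum : Measurable u := by
      apply Measurable.ite (hf'm (measurableSet_singleton 0)) measurable_const
      apply Measurable.mul
      · exact continuous_star.measurable.comp hf'm
      · have : Measurable fun x => ((‖f' x‖⁻¹ : ℝ) : ℂ) :=
          Complex.measurable_ofReal.comp hf'm.norm.inv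
        simpa [Complex.ofReal_inv] using this
    have hu1 : ∀ x, ‖u x‖ ≤ 1 := by
      intro x
      rw [hudef]
      by_cases hx : f' x = 0
      · simp [hx]
      · simp only [hx, if_false]
        rw [norm_mul, RingHomIsometric.norm_map, norm_inv, Complex.norm_real,
          Real.norm_eq_abs, abs_of_nonneg (norm_nonneg _),
          mul_inv_cancel₀ (norm_ne_zero_iff.2 hx)]
    have hufu : ∀ x, f' x * u x = ((‖f' x‖:ℝ):ℂ) := by
      intro x
      rw [hudef]
      by_cases hx : f' x = 0
      · simp [hx]
      · simp only [hx, if_false]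
        have hz : ((‖f' x‖:ℝ):ℂ) ≠ 0 := by exact_mod_cast norm_ne_zero_iff.2 hx
        calc f' x * ((starRingEnd ℂ) (f' x) * ((‖f' x‖:ℝ):ℂ)⁻¹)
            = (f' x * (starRingEnd ℂ) (f' x)) * ((‖f' x‖:ℝ):ℂ)⁻¹ := by ring
          _ = ((‖f' x‖:ℝ):ℂ)^2 * ((‖f' x‖:ℝ):ℂ)⁻¹ := by
              rw [Complex.mul_conj]
              norm_cast
              rw [Complex.normSq_eq_norm_sq]
          _ = ((‖f' x‖:ℝ):ℂ) := by rw [sq, mul_assoc, mul_inv_cancel₀ hz, mul_one]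
    have h1mem : (1:ℂ) ∈ closedBall (0:ℂ) 1 := by
      rw [mem_closedBall_zero_iff]; simp
    set us : ℕ → SimpleFunc (EuclideanSpace ℝ (Fin n)) ℂ := fun j =>
      SimpleFunc.approxOn u hum (closedBall (0:ℂ) 1) 1 h1mem j with husdef
    have husb : ∀ j x, ‖us j x‖ ≤ 1 := fun j x =>
      mem_closedBall_zero_iff.1 (SimpleFunc.approxOn_mem hum h1mem j x)
    have hust : ∀ x, Tendsto (fun j => us j x) atTop (nhds (u x)) := fun x =>
      SimpleFunc.tendsto_approxOn hum h1mem (by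
        rw [IsClosed.closure_eq isClosed_closedBall]
        exact mem_closedBall_zero_iff.2 (hu1 x))
    set sC : ℕ → SimpleFunc (EuclideanSpace ℝ (Fin n)) ℂ := fun j =>
      (r.map (fun t : ℝ => (t:ℂ))) * us j with hsCdef
    have hsCx : ∀ j x, sC j x = (r x : ℂ) * us j x := by
      intro j x
      rw [hsCdef]
      simp [SimpleFunc.coe_mul, SimpleFunc.coe_map, Function.comp]
    have hsCnorm : ∀ j x, (‖sC j x‖₊ : ℝ≥0∞) ≤ (‖r x‖₊ : ℝ≥0∞) := by
      intro j x
      rw [hsCx j x, nnnorm_mul]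
      push_cast
      calc (‖((r x:ℝ):ℂ)‖₊ : ℝ≥0∞) * (‖us j x‖₊ : ℝ≥0∞)
          ≤ (‖((r x:ℝ):ℂ)‖₊ : ℝ≥0∞) * 1 := by
            apply mul_le_mul_right
            rw [show ((1:ℝ≥0∞)) = ((1:NNReal):ℝ≥0∞) from rfl, ENNReal.coe_le_coe]
            exact_mod_cast husb j x
        _ = (‖r x‖₊ : ℝ≥0∞) := by rw [mul_one, Complex.nnnorm_real]
    have hsCsupp : ∀ j, HasCompactSupport ⇑(sC j) := by
      intro j
      apply HasCompactSupport.intro (hrcs.isCompact)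
      intro x hx
      have hrx : r x = 0 := by
        by_contra hcon
        exact hx (subset_tsupport _ (by simp [Function.mem_support, hcon]))
      rw [hsCx j x, hrx]
      simp
    have hsCassoc : ∀ j, X.associate (fun x => (‖sC j x‖₊ : ℝ≥0∞)) ≤ 1 := fun j =>
      le_trans (X.associate_mono fun x => hsCnorm j x) hrassoc
    have hbound : Integrable (fun x => ‖f x‖ * r x) volume := by
      constructor
      · exact (hf.norm.aestronglyMeasurable).mul r.measurable.aestronglyMeasurable
      · show (∫⁻ x, ‖(‖f x‖ * r x)‖₊ ∂volume) < ⊤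
        have heq : (∫⁻ x, (‖(‖f x‖ * r x)‖₊ : ℝ≥0∞) ∂volume)
            = ∫⁻ x, (‖f x‖₊ : ℝ≥0∞) * ‖r x‖₊ ∂volume := by
          apply lintegral_congr fun x => ?_
          rw [nnnorm_mul, nnnorm_norm]
          push_cast
          ring
        rw [heq]
        exact lt_of_le_of_lt (X.lintegral_mul_le_rho hfX hrassoc) hfX
    have hDCT : Tendsto (fun j => ∫ x, f x * sC j x ∂volume) atTop
        (nhds (∫ x, f x * ((r x:ℂ) * u x) ∂volume)) := by
      apply tendsto_integral_of_dominated_convergence (fun x => ‖f x‖ * r x) _ hbound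
      · intro j
        filter_upwards with x
        rw [norm_mul, hsCx j x, norm_mul]
        calc ‖f x‖ * (‖((r x:ℝ):ℂ)‖ * ‖us j x‖)
            ≤ ‖f x‖ * (‖((r x:ℝ):ℂ)‖ * 1) := by
              apply mul_le_mul_of_nonneg_left _ (norm_nonneg _)
              exact mul_le_mul_of_nonneg_left (husb j x) (norm_nonneg _)
          _ = ‖f x‖ * r x := by
              rw [mul_one, Complex.norm_real, Real.norm_eq_abs, abs_of_nonneg (hr0 x)]
      · filter_upwards with x
        have : Tendsto (fun j => f x * ((r x:ℂ) * us j x)) atTop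
            (nhds (f x * ((r x:ℂ) * u x))) :=
          (((hust x).const_mul ((r x:ℝ):ℂ)).const_mul (f x))
        refine this.congr fun j => ?_
        rw [hsCx j x]
      · intro j
        exact hf.aestronglyMeasurable.mul (sC j).stronglyMeasurable.aestronglyMeasurable
    have hIint : Integrable (fun x => r x * ‖f' x‖) volume := by
      apply hbound.congr
      filter_upwards [hff'] with x hx
      rw [hx, mul_comm]
    have hInonneg : (0:ℝ) ≤ ∫ x, r x * ‖f' x‖ ∂volume :=
      integral_nonneg fun x => mul_nonneg (hr0 x) (norm_nonneg _)
    have hLval : ∫ x, f x * ((r x:ℂ) * u x) ∂volume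
        = (((∫ x, r x * ‖f' x‖ ∂volume : ℝ)):ℂ) := by
      have hIof : ∫ x, ((r x * ‖f' x‖ : ℝ):ℂ) ∂volume
          = (((∫ x, r x * ‖f' x‖ ∂volume : ℝ)):ℂ) := integral_ofReal
      rw [← hIof]
      apply integral_congr_ae
      filter_upwards [hff'] with x hx
      rw [hx, show f' x * ((r x:ℂ) * u x) = (r x:ℂ) * (f' x * u x) from by ring, hufu x]
      push_cast
      ring
    have hkey : (lam : ℝ≥0∞) < ENNReal.ofReal (∫ x, r x * ‖f' x‖ ∂volume) := by
      rw [ofReal_integral_eq_lintegral_ofReal hIint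
        (Eventually.of_forall fun x => mul_nonneg (hr0 x) (norm_nonneg _))]
      calc (lam:ℝ≥0∞) < ∫⁻ x, φ m x * ‖r x‖₊ ∂volume := hrlt
        _ ≤ ∫⁻ x, h' x * ‖r x‖₊ ∂volume :=
            lintegral_mono fun x => mul_le_mul_left (hφle m x) _
        _ = ∫⁻ x, ENNReal.ofReal (r x * ‖f' x‖) ∂volume := by
            apply lintegral_congr fun x => ?_
            have haux : ENNReal.ofReal (r x) = ((‖r x‖₊ : ℝ≥0∞)) := by
              rw [← enorm_eq_nnnorm, Real.enorm_eq_ofReal_abs, abs_of_nonneg (hr0 x)]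
            rw [ENNReal.ofReal_mul (hr0 x), ofReal_norm, enorm_eq_nnnorm, haux, mul_comm, hh'def]
    have hlamR : (lam:ℝ) < ∫ x, r x * ‖f' x‖ ∂volume := by
      have := (ENNReal.lt_ofReal_iff_toReal_lt (by simp)).1 hkey
      simpa using this
    have hLnorm : ‖∫ x, f x * ((r x:ℂ) * u x) ∂volume‖ = ∫ x, r x * ‖f' x‖ ∂volume := by
      rw [hLval, Complex.norm_real, Real.norm_eq_abs]
      exact abs_of_nonneg hInonneg
    have hev : ∀ᶠ j in atTop, (lam:ℝ) < ‖∫ x, f x * sC j x ∂volume‖ :=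
      Filter.Tendsto.eventually_const_lt (hLnorm ▸ hlamR) hDCT.norm
    obtain ⟨j, hj⟩ := hev.exists
    refine le_trans ?_ (le_iSup
      (fun s : {s : SimpleFunc (EuclideanSpace ℝ (Fin n)) ℂ //
          HasCompactSupport ⇑s ∧ X.associate (fun x => (‖s x‖₊ : ℝ≥0∞)) ≤ 1} =>
        (‖∫ x, f x * s.1 x‖₊ : ℝ≥0∞)) ⟨sC j, hsCsupp j, hsCassoc j⟩)
    rw [ENNReal.coe_le_coe]
    have : (lam:ℝ) ≤ ‖∫ x, f x * sC j x ∂volume‖ := hj.le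
    exact_mod_cast this
  · -- easy direction
    apply iSup_le
    rintro ⟨s, hs1, hs2⟩
    calc (‖∫ x, f x * s x ∂volume‖₊ : ℝ≥0∞)
        ≤ ∫⁻ x, ‖f x * s x‖₊ ∂volume := enorm_integral_le_lintegral_enorm _
      _ = ∫⁻ x, (‖f x‖₊ : ℝ≥0∞) * ‖s x‖₊ ∂volume := by
          apply lintegral_congr fun x => ?_
          rw [nnnorm_mul]
          push_cast
          ring
      _ ≤ X.ρ (fun x => (‖f x‖₊ : ℝ≥0∞)) := X.lintegral_mul_le_rho hfX hs2
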